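/- Consider in ℝ² the problem: minimize f(x) := −x₁² − x₂ subject to g₁(x) := 2x₁² + x₂ ≤ 0, g₂(x) := −x₁² + x₂ ≤ 0, g₃(x) := x₂ ≤ 0, and let x* = (0,0). Then: (i) x* is a local minimizer at which MFCQ holds; (ii) the critical subspace is S(x*) = {d ∈ ℝ² : d₂ = 0}; (iii) μ̄ := (0,1,0) is a Lagrange multiplier for which the WSOC inequality fails, i.e. there exists d ∈ S(x*) with dᵀ∇²ₓₓL(x*,μ̄)d < 0; (iv) μ := (1,0,0) is a Lagrange multiplier satisfying dᵀ∇²ₓₓL(x*,μ)d ≥ 0 for all d ∈ S(x*), so WSOC holds at x*. In particular this problem is not a counterexample to the Andreani–Martínez–Schuverdt conjecture. -/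

import Mathlib

open scoped BigOperators
open Matrix

attribute [local instance] Classical.propDecidable

noncomputable section

/-- The quadratic form `d ↦ dᵀ ∇²φ(x) d` of the Hessian of `φ` at `x`. -/
def hessQ {n : ℕ} (φ : (Fin n → ℝ) → ℝ) (x d : Fin n → ℝ) : ℝ :=
  iteratedFDeriv ℝ 2 φ x ![d, d]

/-- Feasibility for an inequality-constrained problem. -/
def FeasI {n p : ℕ} (g : Fin p → (Fin n → ℝ) → ℝ) (x : Fin n → ℝ) : Prop :=
  ∀ j, g j x ≤ 0

/-- The Lagrangian of an inequality-constrained problem. -/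
def LagrI {n p : ℕ} (f : (Fin n → ℝ) → ℝ) (g : Fin p → (Fin n → ℝ) → ℝ)
    (mu : Fin p → ℝ) (x : Fin n → ℝ) : ℝ :=
  f x + ∑ j, mu j * g j x

/-- `mu` is a Lagrange multiplier at `xs`, i.e. `mu ∈ Λ(xs)`. -/
def IsLagMultI {n p : ℕ} (f : (Fin n → ℝ) → ℝ) (g : Fin p → (Fin n → ℝ) → ℝ)
    (xs : Fin n → ℝ) (mu : Fin p → ℝ) : Prop :=
  (∀ j, 0 ≤ mu j) ∧ fderiv ℝ (LagrI f g mu) xs = 0 ∧ ∀ j, mu j * g j xs = 0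

/-- MFCQ for an inequality-constrained problem. -/
def MFCQI {n p : ℕ} (g : Fin p → (Fin n → ℝ) → ℝ) (xs : Fin n → ℝ) : Prop :=
  ∃ d : Fin n → ℝ, ∀ j, g j xs = 0 → fderiv ℝ (g j) xs d < 0

/-- Membership in the critical subspace `S(xs)`. -/
def critSubI {n p : ℕ} (g : Fin p → (Fin n → ℝ) → ℝ) (xs d : Fin n → ℝ) : Prop :=
  ∀ j, g j xs = 0 → fderiv ℝ (g j) xs d = 0

/-- Objective of the example from Minchenko–Leschov. -/
def f15 : (Fin 2 → ℝ) → ℝ := fun x => -(x 0) ^ 2 - x 1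

/-- Constraints of the example from Minchenko–Leschov. -/
def g15 : Fin 3 → (Fin 2 → ℝ) → ℝ :=
  ![fun x => 2 * (x 0) ^ 2 + x 1,
    fun x => -(x 0) ^ 2 + x 1,
    fun x => x 1]

-- Auxiliary material --------------------------------------------------------

/-- projection onto coordinate `i`. -/
def pj (i : Fin 2) : (Fin 2 → ℝ) →L[ℝ] ℝ :=
  ContinuousLinearMap.proj i

lemma pj_apply (i : Fin 2) (x : Fin 2 → ℝ) : pj i x = x i := rfl

lemma hasFDerivAt_quad (c : ℝ) (x : Fin 2 → ℝ) :
    HasFDerivAt (fun x : Fin 2 → ℝ => c * (x 0) ^ 2) ((2 * c * x 0) • pj 0) x := by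
  have h0 : HasFDerivAt (fun x : Fin 2 → ℝ => x 0) (pj 0) x := (pj 0).hasFDerivAt
  have h := (h0.mul h0).const_mul c
  have heq : (fun x : Fin 2 → ℝ => c * (x 0 * x 0)) = fun x : Fin 2 → ℝ => c * (x 0) ^ 2 := by
    funext y; ring
  replace h := show HasFDerivAt (fun x : Fin 2 → ℝ => c * (x 0 * x 0)) _ _ from h
  rw [heq] at h
  refine h.congr_fderiv ?_
  ext d
  simp [pj_apply]
  ring

lemma fderiv_quad (c : ℝ) :
    fderiv ℝ (fun x : Fin 2 → ℝ => c * (x 0) ^ 2) = fun x => (2 * c * x 0) • pj 0 :=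
  funext fun x => (hasFDerivAt_quad c x).fderiv

/-- The second derivative's value, via the CLM `T c`. -/
def Tc (c : ℝ) : (Fin 2 → ℝ) →L[ℝ] ((Fin 2 → ℝ) →L[ℝ] ℝ) :=
  ((2 * c) • pj 0).smulRight (pj 0)

lemma hessQ_quad (c : ℝ) (x d : Fin 2 → ℝ) :
    hessQ (fun x : Fin 2 → ℝ => c * (x 0) ^ 2) x d = 2 * c * (d 0) ^ 2 := by
  have h1 : fderiv ℝ (fun x : Fin 2 → ℝ => c * (x 0) ^ 2) = ⇑(Tc c) := by
    rw [fderiv_quad]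
    funext y
    ext e
    show (2 * c * y 0) * e 0 = ((2 * c) * y 0) * e 0
    ring
  rw [hessQ, iteratedFDeriv_two_apply, h1, ContinuousLinearMap.fderiv]
  show (2 * c * d 0) * d 0 = 2 * c * (d 0) ^ 2
  ring

lemma lagr_eq (c₀ c₁ c₂ c : ℝ) (h : c₀ * 2 - c₁ - 1 = c) (h2 : c₀ + c₁ + c₂ = 1) :
    LagrI f15 g15 ![c₀, c₁, c₂] = fun x : Fin 2 → ℝ => c * (x 0) ^ 2 := by
  funext x
  simp only [LagrI, f15, g15, Fin.sum_univ_three, Matrix.cons_val_zero, Matrix.cons_val_one,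
    Matrix.head_cons, Matrix.cons_val_two, Matrix.tail_cons]
  show -(x 0) ^ 2 - x 1 + (c₀ * (2 * (x 0) ^ 2 + x 1) + c₁ * (-(x 0) ^ 2 + x 1) + c₂ * x 1) = c * (x 0) ^ 2
  linear_combination (x 0) ^ 2 * h + (x 1) * h2

lemma g15_zero (j : Fin 3) : g15 j (0 : Fin 2 → ℝ) = 0 := by
  fin_cases j
  · show (2 : ℝ) * (0 : ℝ) ^ 2 + (0 : ℝ) = 0
    norm_num
  · show -(0 : ℝ) ^ 2 + (0 : ℝ) = 0
    norm_num
  · rfl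

lemma fderiv_g15 (j : Fin 3) (d : Fin 2 → ℝ) :
    fderiv ℝ (g15 j) (0 : Fin 2 → ℝ) d = d 1 := by
  have h1 : HasFDerivAt (fun x : Fin 2 → ℝ => x 1) (pj 1) (0 : Fin 2 → ℝ) :=
    (pj 1).hasFDerivAt
  fin_cases j
  · show (fderiv ℝ (g15 0) (0 : Fin 2 → ℝ)) d = d 1
    have h := (hasFDerivAt_quad 2 0).add h1
    have heq : (fun x : Fin 2 → ℝ => 2 * (x 0) ^ 2 + x 1) = g15 0 := by
      funext y; simp [g15]
    replace h := show HasFDerivAt (fun x : Fin 2 → ℝ => 2 * (x 0) ^ 2 + x 1) _ _ from h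
    rw [heq] at h
    rw [h.fderiv]
    simp [pj_apply]
  · show (fderiv ℝ (g15 1) (0 : Fin 2 → ℝ)) d = d 1
    have h := (hasFDerivAt_quad (-1) 0).add h1
    have heq : (fun x : Fin 2 → ℝ => (-1) * (x 0) ^ 2 + x 1) = g15 1 := by
      funext y; show (-1) * (y 0) ^ 2 + y 1 = -(y 0) ^ 2 + y 1; ring
    replace h := show HasFDerivAt (fun x : Fin 2 → ℝ => (-1) * (x 0) ^ 2 + x 1) _ _ from h
    rw [heq] at h
    rw [h.fderiv]
    simp [pj_apply]
  · show (fderiv ℝ (g15 2) (0 : Fin 2 → ℝ)) d = d 1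
    have heq : g15 2 = ⇑(pj 1) := by funext y; simp [g15, pj_apply]
    rw [show (g15 2 : (Fin 2 → ℝ) → ℝ) = ⇑(pj 1) from heq, ContinuousLinearMap.fderiv]
    simp [pj_apply]

lemma isLagMult_aux (c₀ c₁ c₂ c : ℝ) (h : c₀ * 2 - c₁ - 1 = c) (h2 : c₀ + c₁ + c₂ = 1)
    (hn : ∀ j, 0 ≤ (![c₀, c₁, c₂] : Fin 3 → ℝ) j) :
    IsLagMultI f15 g15 (0 : Fin 2 → ℝ) ![c₀, c₁, c₂] := by
  refine ⟨hn, ?_, fun j => by rw [g15_zero, mul_zero]⟩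
  rw [lagr_eq c₀ c₁ c₂ c h h2, fderiv_quad]
  show (2 * c * (0 : ℝ)) • pj 0 = (0 : (Fin 2 → ℝ) →L[ℝ] ℝ)
  rw [mul_zero, zero_smul]

/-- in the Minchenko–Leschov example, the origin is a local minimizer where
MFCQ holds, `S(x*) = {d : d₂ = 0}`, the multiplier `(0,1,0)` violates the WSOC inequality,
but the multiplier `(1,0,0)` satisfies it, so WSOC holds. -/
theorem stmt15 :
    (FeasI g15 (0 : Fin 2 → ℝ) ∧ IsLocalMinOn f15 {x | FeasI g15 x} (0 : Fin 2 → ℝ)) ∧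
    MFCQI g15 (0 : Fin 2 → ℝ) ∧
    ({d : Fin 2 → ℝ | critSubI g15 (0 : Fin 2 → ℝ) d} = {d : Fin 2 → ℝ | d 1 = 0}) ∧
    (IsLagMultI f15 g15 (0 : Fin 2 → ℝ) ![0, 1, 0] ∧
      ∃ d : Fin 2 → ℝ, critSubI g15 (0 : Fin 2 → ℝ) d ∧
        hessQ (LagrI f15 g15 ![0, 1, 0]) (0 : Fin 2 → ℝ) d < 0) ∧
    (IsLagMultI f15 g15 (0 : Fin 2 → ℝ) ![1, 0, 0] ∧
      ∀ d : Fin 2 → ℝ, critSubI g15 (0 : Fin 2 → ℝ) d →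
        0 ≤ hessQ (LagrI f15 g15 ![1, 0, 0]) (0 : Fin 2 → ℝ) d) := by
  refine ⟨⟨fun j => le_of_eq (g15_zero j), ?_⟩, ?_, ?_, ⟨?_, ?_⟩, ⟨?_, ?_⟩⟩
  · -- local min
    apply Filter.eventually_of_mem self_mem_nhdsWithin
    intro x hx
    have h1 : 2 * (x 0) ^ 2 + x 1 ≤ 0 := hx 0
    show f15 0 ≤ f15 x
    simp only [f15, Pi.zero_apply]
    nlinarith [sq_nonneg (x 0)]
  · -- MFCQ
    refine ⟨![0, -1], fun j _ => ?_⟩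
    rw [fderiv_g15]
    norm_num
  · -- critical subspace
    ext d
    simp only [Set.mem_setOf_eq, critSubI]
    constructor
    · intro h
      have := h 2 (g15_zero 2)
      rwa [fderiv_g15] at this
    · intro h j _
      rw [fderiv_g15, h]
  · exact isLagMult_aux 0 1 0 (-2) (by ring) (by ring) (by intro j; fin_cases j <;> norm_num)
  · refine ⟨![1, 0], fun j _ => by rw [fderiv_g15]; norm_num, ?_⟩
    rw [lagr_eq 0 1 0 (-2) (by ring) (by ring), hessQ_quad]
    norm_num
  · exact isLagMult_aux 1 0 0 1 (by ring) (by ring) (by intro j; fin_cases j <;> norm_num)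
  · intro d _
    rw [lagr_eq 1 0 0 1 (by ring) (by ring), hessQ_quad]
    positivity
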